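/- arXiv:2506.22097 — 6 statements merged into one kernel-verified Lean document; each statement's English description precedes it below -/
import Mathlib

section
/- Let F be a field of characteristic ≠ 2, P the upper-triangular Borel subgroup of G = GL₂(F), H = { [[a,b],[b,a]] : a² − b² ≠ 0 }, q = [[1,−1],[1,1]], and w = [[0,1],[1,0]]. Then G is the disjoint union of the double cosets PH, PqH, and PwqH. -/
open Matrix

noncomputable def glmk {F : Type*} [Field F] (M : Matrix (Fin 2) (Fin 2) F)
    (h : M.det ≠ 0) : GL (Fin 2) F :=
  Matrix.nonsingInvUnit M (isUnit_iff_ne_zero.mpr h)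

@[simp] lemma glmk_val {F : Type*} [Field F] (M : Matrix (Fin 2) (Fin 2) F)
    (h : M.det ≠ 0) : ((glmk M h : GL (Fin 2) F) : Matrix (Fin 2) (Fin 2) F) = M := rfl

lemma gl_det_ne {F : Type*} [Field F] (g : GL (Fin 2) F) :
    ((g : Matrix (Fin 2) (Fin 2) F)).det ≠ 0 :=
  ((Matrix.isUnit_iff_isUnit_det _).mp (Units.isUnit g)).ne_zero

theorem stmt3 (F : Type*) [Field F] (hchar : (2 : F) ≠ 0)
    (q w : GL (Fin 2) F)
    (hq : (q : Matrix (Fin 2) (Fin 2) F) = !![1, -1; 1, 1])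
    (hw : (w : Matrix (Fin 2) (Fin 2) F) = !![0, 1; 1, 0])
    (P H : Set (GL (Fin 2) F))
    (hP : P = {p : GL (Fin 2) F | ∃ a b c : F,
        (p : Matrix (Fin 2) (Fin 2) F) = !![a, b; 0, c]})
    (hH : H = {h : GL (Fin 2) F | ∃ a b : F,
        (h : Matrix (Fin 2) (Fin 2) F) = !![a, b; b, a]}) :
    (∀ g : GL (Fin 2) F,
        (∃ p ∈ P, ∃ h ∈ H, g = p * h) ∨
        (∃ p ∈ P, ∃ h ∈ H, g = p * q * h) ∨
        (∃ p ∈ P, ∃ h ∈ H, g = p * w * q * h)) ∧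
    (¬ ∃ g : GL (Fin 2) F, (∃ p ∈ P, ∃ h ∈ H, g = p * h) ∧
        (∃ p ∈ P, ∃ h ∈ H, g = p * q * h)) ∧
    (¬ ∃ g : GL (Fin 2) F, (∃ p ∈ P, ∃ h ∈ H, g = p * h) ∧
        (∃ p ∈ P, ∃ h ∈ H, g = p * w * q * h)) ∧
    (¬ ∃ g : GL (Fin 2) F, (∃ p ∈ P, ∃ h ∈ H, g = p * q * h) ∧
        (∃ p ∈ P, ∃ h ∈ H, g = p * w * q * h)) := by
  subst hP hH
  refine ⟨?_, ?_, ?_, ?_⟩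
  · intro g
    have hd := gl_det_ne g
    obtain ⟨a, b, c, d, hM⟩ : ∃ a b c d, (g : Matrix (Fin 2) (Fin 2) F) = !![a,b;c,d] :=
      ⟨_, _, _, _, Matrix.eta_fin_two _⟩
    rw [hM, Matrix.det_fin_two_of] at hd
    by_cases hcd : c = d
    · subst hcd
      -- bottom row (c, c); if c = 0, det = 0
      have hc : c ≠ 0 := by intro h; apply hd; rw [h]; ring
      have hab : a - b ≠ 0 := by intro h; apply hd; rw [sub_eq_zero.mp h]; ring
      have hp : (!![(a-b)/(2*c), (a+b)/(2*c); 0, 1] : Matrix (Fin 2) (Fin 2) F).det ≠ 0 := by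
        rw [Matrix.det_fin_two_of]
        simpa using div_ne_zero hab (mul_ne_zero hchar hc)
      have hh : (!![c, 0; 0, c] : Matrix (Fin 2) (Fin 2) F).det ≠ 0 := by
        rw [Matrix.det_fin_two_of]; simpa using mul_ne_zero hc hc
      refine Or.inr (Or.inl ⟨glmk _ hp, ⟨_, _, _, rfl⟩, glmk _ hh, ⟨c, 0, rfl⟩, Units.ext ?_⟩)
      rw [Units.val_mul, Units.val_mul, hq, hM, glmk_val, glmk_val]
      ext i j
      fin_cases i <;> fin_cases j <;>
        simp [Matrix.mul_apply, Fin.sum_univ_two] <;> field_simp <;> ring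
    · by_cases hcd' : c = -d
      · subst hcd'
        -- bottom row (-d, d)
        have hdne : d ≠ 0 := by intro h; apply hcd; rw [h]; ring
        have hab : a + b ≠ 0 := by
          intro h; apply hd
          rw [eq_neg_of_add_eq_zero_left h]; ring
        have hp : (!![-(a+b)/(2*d), -(a-b)/(2*d); 0, 1] : Matrix (Fin 2) (Fin 2) F).det ≠ 0 := by
          rw [Matrix.det_fin_two_of]
          have : -(a+b) ≠ 0 := neg_ne_zero.mpr hab
          simpa using div_ne_zero this (mul_ne_zero hchar hdne)
        have hh : (!![-d, 0; 0, -d] : Matrix (Fin 2) (Fin 2) F).det ≠ 0 := by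
          rw [Matrix.det_fin_two_of]
          simpa using mul_ne_zero (neg_ne_zero.mpr hdne) (neg_ne_zero.mpr hdne)
        refine Or.inr (Or.inr ⟨glmk _ hp, ⟨_, _, _, rfl⟩, glmk _ hh, ⟨-d, 0, rfl⟩, Units.ext ?_⟩)
        rw [Units.val_mul, Units.val_mul, Units.val_mul, hq, hw, hM, glmk_val, glmk_val]
        ext i j
        fin_cases i <;> fin_cases j <;>
          simp [Matrix.mul_apply, Fin.sum_univ_two] <;> field_simp <;> ring
      · -- c² ≠ d²
        have h1 : d - c ≠ 0 := sub_ne_zero.mpr (fun h => hcd h.symm)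
        have h2 : d + c ≠ 0 := fun h => hcd' (eq_neg_of_add_eq_zero_right h)
        have he : d * d - c * c ≠ 0 := by
          intro h; exact mul_ne_zero h1 h2 (by linear_combination h)
        have hp : (!![(a*d-b*c)/(d*d-c*c), (b*d-a*c)/(d*d-c*c); 0, 1] :
            Matrix (Fin 2) (Fin 2) F).det ≠ 0 := by
          rw [Matrix.det_fin_two_of]
          have hnum : a*d - b*c ≠ 0 := hd
          simpa using div_ne_zero hnum he
        have hh : (!![d, c; c, d] : Matrix (Fin 2) (Fin 2) F).det ≠ 0 := by
          rw [Matrix.det_fin_two_of]; exact he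
        refine Or.inl ⟨glmk _ hp, ⟨_, _, _, rfl⟩, glmk _ hh, ⟨d, c, rfl⟩, Units.ext ?_⟩
        rw [Units.val_mul, hM, glmk_val, glmk_val]
        have he2 : d ^ 2 - c ^ 2 ≠ 0 := by rw [sq, sq]; exact he
        have he3 : -c ^ 2 + d ^ 2 ≠ 0 := by rw [neg_add_eq_sub]; exact he2
        ext i j
        fin_cases i <;> fin_cases j <;>
          simp [Matrix.mul_apply, Fin.sum_univ_two] <;> field_simp [he2, he3] <;> ring
  · rintro ⟨g, ⟨p1, ⟨a1, b1, c1, hp1⟩, h1, ⟨x1, y1, hh1⟩, e1⟩,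
      p2, ⟨a2, b2, c2, hp2⟩, h2, ⟨x2, y2, hh2⟩, e2⟩
    have d1 := gl_det_ne p1; rw [hp1, Matrix.det_fin_two_of] at d1
    have dh1 := gl_det_ne h1; rw [hh1, Matrix.det_fin_two_of] at dh1
    have d2 := gl_det_ne p2; rw [hp2, Matrix.det_fin_two_of] at d2
    have dh2 := gl_det_ne h2; rw [hh2, Matrix.det_fin_two_of] at dh2
    have E : (!![a1,b1;0,c1] * !![x1,y1;y1,x1] : Matrix (Fin 2) (Fin 2) F)
        = !![a2,b2;0,c2] * !![1,-1;1,1] * !![x2,y2;y2,x2] := by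
      rw [← hp1, ← hh1, ← hp2, ← hq, ← hh2, ← Units.val_mul, ← Units.val_mul,
        ← Units.val_mul, ← e1, ← e2]
    have h10 := congrFun (congrFun E 1) 0
    have h11 := congrFun (congrFun E 1) 1
    simp [Matrix.mul_apply, Fin.sum_univ_two] at h10 h11
    have hc1 : c1 ≠ 0 := fun h => d1 (by rw [h]; ring)
    have hxy : y1 = x1 := mul_left_cancel₀ hc1 (by linear_combination h10 - h11)
    apply dh1; rw [hxy]; ring
  · rintro ⟨g, ⟨p1, ⟨a1, b1, c1, hp1⟩, h1, ⟨x1, y1, hh1⟩, e1⟩,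
      p2, ⟨a2, b2, c2, hp2⟩, h2, ⟨x2, y2, hh2⟩, e2⟩
    have d1 := gl_det_ne p1; rw [hp1, Matrix.det_fin_two_of] at d1
    have dh1 := gl_det_ne h1; rw [hh1, Matrix.det_fin_two_of] at dh1
    have d2 := gl_det_ne p2; rw [hp2, Matrix.det_fin_two_of] at d2
    have dh2 := gl_det_ne h2; rw [hh2, Matrix.det_fin_two_of] at dh2
    have E : (!![a1,b1;0,c1] * !![x1,y1;y1,x1] : Matrix (Fin 2) (Fin 2) F)
        = !![a2,b2;0,c2] * !![0,1;1,0] * !![1,-1;1,1] * !![x2,y2;y2,x2] := by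
      rw [← hp1, ← hh1, ← hp2, ← hw, ← hq, ← hh2, ← Units.val_mul, ← Units.val_mul,
        ← Units.val_mul, ← Units.val_mul, ← e1, ← e2]
    have h10 := congrFun (congrFun E 1) 0
    have h11 := congrFun (congrFun E 1) 1
    simp [Matrix.mul_apply, Fin.sum_univ_two] at h10 h11
    have hc1 : c1 ≠ 0 := fun h => d1 (by rw [h]; ring)
    have hxy : x1 = -y1 := mul_left_cancel₀ hc1 (by linear_combination h10 + h11)
    apply dh1; rw [hxy]; ring
  · rintro ⟨g, ⟨p1, ⟨a1, b1, c1, hp1⟩, h1, ⟨x1, y1, hh1⟩, e1⟩,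
      p2, ⟨a2, b2, c2, hp2⟩, h2, ⟨x2, y2, hh2⟩, e2⟩
    have d1 := gl_det_ne p1; rw [hp1, Matrix.det_fin_two_of] at d1
    have dh1 := gl_det_ne h1; rw [hh1, Matrix.det_fin_two_of] at dh1
    have d2 := gl_det_ne p2; rw [hp2, Matrix.det_fin_two_of] at d2
    have dh2 := gl_det_ne h2; rw [hh2, Matrix.det_fin_two_of] at dh2
    have E : (!![a1,b1;0,c1] * !![1,-1;1,1] * !![x1,y1;y1,x1] : Matrix (Fin 2) (Fin 2) F)
        = !![a2,b2;0,c2] * !![0,1;1,0] * !![1,-1;1,1] * !![x2,y2;y2,x2] := by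
      rw [← hp1, ← hq, ← hh1, ← hp2, ← hw, ← hh2, ← Units.val_mul, ← Units.val_mul,
        ← Units.val_mul, ← Units.val_mul, ← Units.val_mul, ← e1, ← e2]
    have h10 := congrFun (congrFun E 1) 0
    have h11 := congrFun (congrFun E 1) 1
    simp [Matrix.mul_apply, Fin.sum_univ_two] at h10 h11
    have hc1 : c1 ≠ 0 := fun h => d1 (by rw [h]; ring)
    have hs : (2:F) * (c1 * (x1 + y1)) = 0 := by linear_combination h10 + h11
    have hxy : x1 + y1 = 0 := by
      rcases mul_eq_zero.mp hs with h | h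
      · exact absurd h hchar
      · rcases mul_eq_zero.mp h with h' | h'
        · exact absurd h' hc1
        · exact h'
    apply dh1; linear_combination (x1 - y1) * hxy
end

section
/- Let F be a field and τ ∈ F× a non-square. Let G = GL₂(F), P the upper-triangular Borel subgroup, and H = { [[a,b],[τb,a]] : a² − τb² ≠ 0 }. Then G = PH, i.e. every g ∈ GL₂(F) can be written as g = p h with p ∈ P and h ∈ H. -/
open Matrix

theorem stmt4 (F : Type*) [Field F] (τ : F) (hτ : τ ≠ 0)
    (hns : ¬ ∃ x : F, x ^ 2 = τ) :
    ∀ g : GL (Fin 2) F, ∃ p h : GL (Fin 2) F,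
      (∃ a b c : F, (p : Matrix (Fin 2) (Fin 2) F) = !![a, b; 0, c]) ∧
      (∃ a b : F, (h : Matrix (Fin 2) (Fin 2) F) = !![a, b; τ * b, a]) ∧
      g = p * h := by
  intro g
  set A : Matrix (Fin 2) (Fin 2) F := (g : Matrix (Fin 2) (Fin 2) F) with hA
  have hdetg : A.det ≠ 0 := by
    have h1 : IsUnit A := g.isUnit
    have := (Matrix.isUnit_iff_isUnit_det A).mp h1
    exact this.ne_zero
  set c := A 1 0 with hc
  set d := A 1 1 with hd
  have hdetA : A.det = A 0 0 * d - A 0 1 * c := by rw [Matrix.det_fin_two]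
  have he : τ * d * d - c * c ≠ 0 := by
    intro h
    by_cases hd0 : d = 0
    · have hc0 : c = 0 := by
        rw [hd0] at h
        simpa using h
      apply hdetg
      rw [hdetA, hd0, hc0]; ring
    · apply hns
      refine ⟨c / d, ?_⟩
      field_simp
      linear_combination -h
  set M : Matrix (Fin 2) (Fin 2) F := !![d, c / τ; c, d] with hM
  have hdetM : M.det = (τ * d * d - c * c) / τ := by
    rw [hM, Matrix.det_fin_two_of]; field_simp
  have hMu : IsUnit M := (Matrix.isUnit_iff_isUnit_det M).mpr
    (isUnit_iff_ne_zero.mpr (by rw [hdetM]; exact div_ne_zero he hτ))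
  set P : Matrix (Fin 2) (Fin 2) F :=
    !![A.det * τ / (τ * d * d - c * c),
       (A 0 1 * d * τ - A 0 0 * c) / (τ * d * d - c * c); 0, 1] with hP
  have hdetP : P.det = A.det * τ / (τ * d * d - c * c) := by
    rw [hP, Matrix.det_fin_two_of]; ring
  have hPu : IsUnit P := (Matrix.isUnit_iff_isUnit_det P).mpr
    (isUnit_iff_ne_zero.mpr (by
      rw [hdetP]; exact div_ne_zero (mul_ne_zero hdetg hτ) he))
  refine ⟨hPu.unit, hMu.unit,
    ⟨A.det * τ / (τ * d * d - c * c),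
     (A 0 1 * d * τ - A 0 0 * c) / (τ * d * d - c * c), 1, hPu.unit_spec⟩,
    ⟨d, c / τ, ?_⟩, ?_⟩
  · rw [hMu.unit_spec, hM, mul_div_cancel₀ c hτ]
  · apply Units.ext
    show A = _
    rw [Units.val_mul, hPu.unit_spec, hMu.unit_spec, hP, hM]
    ext i j
    fin_cases i <;> fin_cases j <;>
      simp [Matrix.mul_apply, Fin.sum_univ_two] <;>
      · first
          | rfl
          | (rw [hdetA]
             have he' : d ^ 2 * τ - c ^ 2 ≠ 0 := fun h0 => he (by linear_combination h0)
             field_simp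
             ring)
end

section
/- Let F be a field, G = GL₂(F), M the diagonal torus, and H = { [[a,b],[b,a]] : a² − b² ≠ 0 } (over F). Then for any matrix product AB with A = diag(a,b) (a,b in an extension field, ab ≠ 0) and B = [[c,d],[d,c]] (c,d in an extension field, c² − d² ≠ 0): if AB has all entries in F, then AB ∈ M(F)·H(F), i.e. AB can be written as a product of an F-rational diagonal invertible matrix and an F-rational matrix of the form [[x,y],[y,x]]. -/
open Matrix

theorem stmt5 (F E : Type*) [Field F] [Field E] [Algebra F E]
    (a b c d : E) (hab : a * b ≠ 0) (hcd : c ^ 2 - d ^ 2 ≠ 0)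
    (hrat : ∀ i j, (!![a, 0; 0, b] * !![c, d; d, c] : Matrix (Fin 2) (Fin 2) E) i j
      ∈ Set.range (algebraMap F E)) :
    ∃ x y z w : F, x * y ≠ 0 ∧ z ^ 2 - w ^ 2 ≠ 0 ∧
      (!![a, 0; 0, b] * !![c, d; d, c] : Matrix (Fin 2) (Fin 2) E) =
        ((!![x, 0; 0, y] * !![z, w; w, z] : Matrix (Fin 2) (Fin 2) F)).map (algebraMap F E) := by
  have ha : a ≠ 0 := left_ne_zero_of_mul hab
  have hb : b ≠ 0 := right_ne_zero_of_mul hab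
  have hinj : Function.Injective (algebraMap F E) := (algebraMap F E).injective
  rw [Matrix.mul_fin_two] at hrat ⊢
  simp only [mul_zero, zero_mul, add_zero, zero_add] at hrat ⊢
  obtain ⟨P, hP⟩ := hrat 0 0
  obtain ⟨Q, hQ⟩ := hrat 0 1
  obtain ⟨R, hR⟩ := hrat 1 0
  obtain ⟨S, hS⟩ := hrat 1 1
  simp only [Matrix.cons_val_zero, Matrix.cons_val_one, Matrix.head_cons,
    Matrix.cons_val', Matrix.cons_val_fin_one, Matrix.empty_val',
    Matrix.head_fin_const, Matrix.of_apply] at hP hQ hR hS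
  by_cases hc : c = 0
  · -- c = 0, so d ≠ 0
    have hd : d ≠ 0 := by
      intro hd; apply hcd; rw [hc, hd]; ring
    refine ⟨Q, R, 0, 1, ?_, ?_, ?_⟩
    · apply mul_ne_zero
      · intro h; apply mul_ne_zero ha hd; rw [← hQ, h, map_zero]
      · intro h; apply mul_ne_zero hb hd; rw [← hR, h, map_zero]
    · simp
    · rw [Matrix.mul_fin_two]
      ext i j
      fin_cases i <;> fin_cases j <;>
        simp [Matrix.map_apply, ← hQ, ← hR, hc]
  · -- c ≠ 0
    have hP0 : P ≠ 0 := by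
      intro h; apply mul_ne_zero ha hc; rw [← hP, h, map_zero]
    have hS0 : S ≠ 0 := by
      intro h; apply mul_ne_zero hb hc; rw [← hS, h, map_zero]
    refine ⟨1, S / P, P, Q, ?_, ?_, ?_⟩
    · simp [div_ne_zero hS0 hP0]
    · intro h
      apply hcd
      have : algebraMap F E (P ^ 2 - Q ^ 2) = a ^ 2 * (c ^ 2 - d ^ 2) := by
        push_cast [map_sub, map_pow, hP, hQ]; ring
      rw [h, map_zero] at this
      have := this.symm
      rcases mul_eq_zero.1 this with h' | h'
      · exact absurd (pow_eq_zero_iff (n := 2) (by norm_num) |>.1 h') ha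
      · exact absurd h' (fun hh => hcd hh)
    · have hac : a * c ≠ 0 := mul_ne_zero ha hc
      rw [Matrix.mul_fin_two]
      ext i j
      fin_cases i <;> fin_cases j <;>
        simp only [Matrix.map_apply, Matrix.cons_val_zero, Matrix.cons_val_one,
          Matrix.head_cons, Matrix.cons_val', Matrix.empty_val',
          Matrix.cons_val_fin_one, Matrix.head_fin_const, Matrix.of_apply,
          Fin.mk_zero, Fin.mk_one, map_add, _root_.map_mul, map_div₀,
          _root_.map_one, map_zero, zero_mul, mul_zero, add_zero, zero_add,
          one_mul, hP, hQ, hS]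
      all_goals field_simp
      all_goals ring
end

section
/- Let F be a non-archimedean local field (or any topological field in which F× is open and the determinant is continuous). Let P be the upper-triangular Borel of GL₂(F) and H = { [[a,b],[τb,a]] : a² − τb² ≠ 0 } for τ ∈ F×. Then the double coset PH is open in GL₂(F). -/
open Matrix

theorem stmt13 (F : Type*) [Field F] [TopologicalSpace F] [IsTopologicalRing F]
    (hopen : IsOpen {x : F | x ≠ 0}) (τ : F) (hτ : τ ≠ 0) :
    IsOpen {g : GL (Fin 2) F | ∃ p h : GL (Fin 2) F,
      (∃ a b c : F, (p : Matrix (Fin 2) (Fin 2) F) = !![a, b; 0, c]) ∧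
      (∃ a b : F, (h : Matrix (Fin 2) (Fin 2) F) = !![a, b; τ * b, a]) ∧
      g = p * h} := by
  have hset : {g : GL (Fin 2) F | ∃ p h : GL (Fin 2) F,
      (∃ a b c : F, (p : Matrix (Fin 2) (Fin 2) F) = !![a, b; 0, c]) ∧
      (∃ a b : F, (h : Matrix (Fin 2) (Fin 2) F) = !![a, b; τ * b, a]) ∧
      g = p * h} =
      (fun g : GL (Fin 2) F =>
        τ * ((g : Matrix (Fin 2) (Fin 2) F) 1 1) ^ 2
          - ((g : Matrix (Fin 2) (Fin 2) F) 1 0) ^ 2) ⁻¹' {x : F | x ≠ 0} := by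
    ext g
    simp only [Set.mem_setOf_eq, Set.mem_preimage]
    constructor
    · rintro ⟨p, h, ⟨a, b, c, hp⟩, ⟨x, y, hh⟩, rfl⟩
      have hdp : (a * c - b * 0) ≠ 0 := by
        have := ((Matrix.isUnit_iff_isUnit_det _).mp p.isUnit).ne_zero
        rwa [hp, Matrix.det_fin_two_of] at this
      have hdh : (x * x - y * (τ * y)) ≠ 0 := by
        have := ((Matrix.isUnit_iff_isUnit_det _).mp h.isUnit).ne_zero
        rwa [hh, Matrix.det_fin_two_of] at this
      have hc : c ≠ 0 := by
        intro h0; apply hdp; rw [h0]; ring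
      have hmul : ((p * h : GL (Fin 2) F) : Matrix (Fin 2) (Fin 2) F)
          = (p : Matrix (Fin 2) (Fin 2) F) * (h : Matrix (Fin 2) (Fin 2) F) := rfl
      rw [hmul, hp, hh, Matrix.mul_fin_two]
      simp only [Matrix.of_apply, Matrix.cons_val', Matrix.cons_val_zero, Matrix.cons_val_one,
        Matrix.head_cons, Matrix.empty_val', Matrix.cons_val_fin_one, Matrix.head_fin_const]
      have key : τ * (0 * y + c * x) ^ 2 - (0 * x + c * (τ * y)) ^ 2
          = c ^ 2 * τ * (x * x - y * (τ * y)) := by ring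
      rw [key]
      exact mul_ne_zero (mul_ne_zero (pow_ne_zero _ hc) hτ) hdh
    · intro hne
      obtain ⟨m00, m01, m10, m11, hm⟩ :
          ∃ a b c d, (g : Matrix (Fin 2) (Fin 2) F) = !![a, b; c, d] :=
        ⟨_, _, _, _, Matrix.eta_fin_two _⟩
      rw [hm] at hne
      simp only [Matrix.cons_val', Matrix.cons_val_zero, Matrix.cons_val_one,
        Matrix.head_cons, Matrix.empty_val', Matrix.cons_val_fin_one, Matrix.head_fin_const,
        Matrix.of_apply] at hne
      have hne' : τ * m11 ^ 2 - m10 ^ 2 ≠ 0 := hne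
      have hdetg : m00 * m11 - m01 * m10 ≠ 0 := by
        have := ((Matrix.isUnit_iff_isUnit_det _).mp g.isUnit).ne_zero
        rwa [hm, Matrix.det_fin_two_of] at this
      -- x = τ * m11, y = m10, Δ = x*x - y*(τ*y) = τ*(τ*m11^2 - m10^2)
      have hΔ : (τ * m11) * (τ * m11) - m10 * (τ * m10) ≠ 0 := by
        have h2 := mul_ne_zero hτ hne'
        intro h0; apply h2; linear_combination h0
      set Δ : F := (τ * m11) * (τ * m11) - m10 * (τ * m10) with hΔdef
      have hHdet : (!![τ * m11, m10; τ * m10, τ * m11] : Matrix (Fin 2) (Fin 2) F).det ≠ 0 := by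
        rw [Matrix.det_fin_two_of]; exact hΔ
      have hA : ((τ * m11) * m00 - (τ * m10) * m01) / Δ ≠ 0 := by
        refine div_ne_zero ?_ hΔ
        intro h0; apply mul_ne_zero hτ hdetg; linear_combination h0
      have hPdet : (!![((τ * m11) * m00 - (τ * m10) * m01) / Δ,
          ((τ * m11) * m01 - m10 * m00) / Δ; 0, τ⁻¹] : Matrix (Fin 2) (Fin 2) F).det ≠ 0 := by
        rw [Matrix.det_fin_two_of]
        simp only [mul_zero, sub_zero]
        exact mul_ne_zero hA (inv_ne_zero hτ)
      refine ⟨Matrix.GeneralLinearGroup.mkOfDetNeZero _ hPdet,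
        Matrix.GeneralLinearGroup.mkOfDetNeZero _ hHdet,
        ⟨_, _, _, rfl⟩, ⟨τ * m11, m10, rfl⟩, ?_⟩
      apply Units.ext
      show (g : Matrix (Fin 2) (Fin 2) F)
        = (!![((τ * m11) * m00 - (τ * m10) * m01) / Δ,
            ((τ * m11) * m01 - m10 * m00) / Δ; 0, τ⁻¹] : Matrix (Fin 2) (Fin 2) F)
          * !![τ * m11, m10; τ * m10, τ * m11]
      rw [hm, Matrix.mul_fin_two]
      ext i j
      fin_cases i <;> fin_cases j <;>
        simp only [Matrix.of_apply, Matrix.cons_val', Matrix.cons_val_zero, Matrix.cons_val_one,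
          Matrix.head_cons, Matrix.empty_val', Matrix.cons_val_fin_one, Matrix.head_fin_const,
          Fin.isValue, Fin.zero_eta, Fin.mk_one] <;>
        field_simp <;> rw [hΔdef] at * <;> ring
  rw [hset]
  have h1 : Continuous fun g : GL (Fin 2) F => (g : Matrix (Fin 2) (Fin 2) F) :=
    Units.continuous_val
  have h11 : Continuous fun g : GL (Fin 2) F => (g : Matrix (Fin 2) (Fin 2) F) 1 1 := by
    exact ((continuous_apply (1 : Fin 2)).comp (continuous_apply (1 : Fin 2))).comp h1
  have h10 : Continuous fun g : GL (Fin 2) F => (g : Matrix (Fin 2) (Fin 2) F) 1 0 := by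
    exact ((continuous_apply (0 : Fin 2)).comp (continuous_apply (1 : Fin 2))).comp h1
  have hcont : Continuous fun g : GL (Fin 2) F =>
      τ * ((g : Matrix (Fin 2) (Fin 2) F) 1 1) ^ 2
        - ((g : Matrix (Fin 2) (Fin 2) F) 1 0) ^ 2 :=
    (continuous_const.mul (h11.pow 2)).sub (h10.pow 2)
  exact hopen.preimage hcont
end

section
/- Let F be a field, τ ∈ F×. Define Θ : GL₂(F) → F by Θ(g) = d(w g w⁻¹ g⁻¹) where w = [[0,1],[τ,0]] (split case τ=1: w = [[0,1],[1,0]]) and d(g) denotes the (1,1)-entry of g. Then for the split case (τ = 1), H = { h : whw⁻¹ = h }: for all p = [[a,b],[0,c]] ∈ P, h ∈ H, and g ∈ GL₂(F), one has d(σ(pgh)(pgh)⁻¹) = (c/a) · d(σ(g)g⁻¹), where σ(x) = wxw⁻¹. -/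
open Matrix

theorem stmt16 (F : Type*) [Field F]
    (w : GL (Fin 2) F) (hw : (w : Matrix (Fin 2) (Fin 2) F) = !![0, 1; 1, 0])
    (a b c : F) (ha : a ≠ 0) (hc : c ≠ 0)
    (p : GL (Fin 2) F) (hp : (p : Matrix (Fin 2) (Fin 2) F) = !![a, b; 0, c])
    (h : GL (Fin 2) F) (hh : w * h * w⁻¹ = h)
    (g : GL (Fin 2) F) :
    ((w * (p * g * h) * w⁻¹ * (p * g * h)⁻¹ : GL (Fin 2) F) :
        Matrix (Fin 2) (Fin 2) F) 0 0 =
      a⁻¹ * c * ((w * g * w⁻¹ * g⁻¹ : GL (Fin 2) F) : Matrix (Fin 2) (Fin 2) F) 0 0 := by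
  have h1 : h * w⁻¹ = w⁻¹ * h := by
    conv_rhs => rw [← hh]
    group
  have key : w * (p * g * h) * w⁻¹ * (p * g * h)⁻¹
      = (w * p * w⁻¹) * (w * g * w⁻¹ * g⁻¹) * p⁻¹ := by
    calc w * (p * g * h) * w⁻¹ * (p * g * h)⁻¹
        = w * p * g * (h * w⁻¹) * (h⁻¹ * g⁻¹ * p⁻¹) := by
          rw [_root_.mul_inv_rev, _root_.mul_inv_rev]; group
      _ = w * p * g * (w⁻¹ * h) * (h⁻¹ * g⁻¹ * p⁻¹) := by rw [h1]
      _ = (w * p * w⁻¹) * (w * g * w⁻¹ * g⁻¹) * p⁻¹ := by group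
  -- w⁻¹ = w
  have hww : w * w = 1 := by
    apply Units.ext
    show (w : Matrix (Fin 2) (Fin 2) F) * w = 1
    rw [hw]
    norm_num [Matrix.mul_fin_two]
    exact Matrix.one_fin_two.symm
  have hwinv : w⁻¹ = w := by
    rw [eq_comm, eq_inv_iff_mul_eq_one, hww]
  -- matrix of w * p * w⁻¹
  have hσp : ((w * p * w⁻¹ : GL (Fin 2) F) : Matrix (Fin 2) (Fin 2) F)
      = !![c, 0; b, a] := by
    rw [hwinv]
    show (w : Matrix (Fin 2) (Fin 2) F) * p * w = _
    rw [hw, hp]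
    norm_num [Matrix.mul_fin_two]
  -- entries of p⁻¹
  set m : Matrix (Fin 2) (Fin 2) F := ((p⁻¹ : GL (Fin 2) F) : Matrix (Fin 2) (Fin 2) F) with hm
  have hmp : m * (p : Matrix (Fin 2) (Fin 2) F) = 1 := by
    rw [hm]
    exact_mod_cast Units.inv_mul p
  have hm00 : m 0 0 = a⁻¹ := by
    have := congrFun (congrFun hmp 0) 0
    simp [Matrix.mul_apply, hp, Fin.sum_univ_succ] at this
    field_simp
    linear_combination this
  have hm10 : m 1 0 = 0 := by
    have := congrFun (congrFun hmp 1) 0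
    simp [Matrix.mul_apply, hp, Fin.sum_univ_succ] at this
    rcases this with h' | h'
    · exact h'
    · exact absurd h' ha
  rw [key]
  show (((w * p * w⁻¹ : GL (Fin 2) F) : Matrix (Fin 2) (Fin 2) F) *
      ((w * g * w⁻¹ * g⁻¹ : GL (Fin 2) F) : Matrix (Fin 2) (Fin 2) F) * m) 0 0 = _
  rw [hσp]
  set X : Matrix (Fin 2) (Fin 2) F := ((w * g * w⁻¹ * g⁻¹ : GL (Fin 2) F) : Matrix (Fin 2) (Fin 2) F)
  simp [Matrix.mul_apply, Matrix.vecMul, dotProduct, Fin.sum_univ_succ, hm00, hm10]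
  ring
end

section
/- Let F be a field, w = [[0,1],[1,0]], σ(g) = wgw⁻¹, d(g) = the (1,1)-entry of g. Then for g ∈ GL₂(F): d(σ(g)g⁻¹) ≠ 0 if and only if g ∈ PH, where P is the upper-triangular Borel and H is the σ-fixed subgroup { [[a,b],[b,a]] : a²−b² ≠ 0 }. (Assume char F ≠ 2.) -/
open Matrix

theorem stmt17 (F : Type*) [Field F] (hchar : (2 : F) ≠ 0)
    (w : GL (Fin 2) F) (hw : (w : Matrix (Fin 2) (Fin 2) F) = !![0, 1; 1, 0])
    (g : GL (Fin 2) F) :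
    ((w * g * w⁻¹ * g⁻¹ : GL (Fin 2) F) : Matrix (Fin 2) (Fin 2) F) 0 0 ≠ 0 ↔
      ∃ p h : GL (Fin 2) F,
        (∃ a b c : F, (p : Matrix (Fin 2) (Fin 2) F) = !![a, b; 0, c]) ∧
        (∃ a b : F, (h : Matrix (Fin 2) (Fin 2) F) = !![a, b; b, a]) ∧
        g = p * h := by
  set A := (g : Matrix (Fin 2) (Fin 2) F) 0 0 with hA
  set B := (g : Matrix (Fin 2) (Fin 2) F) 0 1 with hB
  set C := (g : Matrix (Fin 2) (Fin 2) F) 1 0 with hC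
  set D := (g : Matrix (Fin 2) (Fin 2) F) 1 1 with hD
  have hM : (g : Matrix (Fin 2) (Fin 2) F) = !![A, B; C, D] := Matrix.eta_fin_two _
  have hΔ : A * D - B * C ≠ 0 := by
    have : IsUnit (g : Matrix (Fin 2) (Fin 2) F) := ⟨g, rfl⟩
    have := ((Matrix.isUnit_iff_isUnit_det _).mp this).ne_zero
    rwa [hM, Matrix.det_fin_two_of] at this
  -- inverse of g
  have hginv : ((g⁻¹ : GL (Fin 2) F) : Matrix (Fin 2) (Fin 2) F)
      = (A * D - B * C)⁻¹ • !![D, -B; -C, A] := by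
    rw [Matrix.coe_units_inv]
    apply Matrix.inv_eq_right_inv
    rw [hM, Matrix.mul_smul]
    rw [show (!![A, B; C, D] * !![D, -B; -C, A] : Matrix (Fin 2) (Fin 2) F)
        = (A * D - B * C) • 1 by
      ext i j
      fin_cases i <;> fin_cases j <;>
        simp [Matrix.mul_apply, Fin.sum_univ_two, Matrix.one_apply] <;> ring]
    rw [smul_smul, inv_mul_cancel₀ hΔ, one_smul]
  have hwinv : ((w⁻¹ : GL (Fin 2) F) : Matrix (Fin 2) (Fin 2) F) = !![0, 1; 1, 0] := by
    rw [Matrix.coe_units_inv, hw]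
    apply Matrix.inv_eq_right_inv
    ext i j
    fin_cases i <;> fin_cases j <;>
      simp [Matrix.mul_apply, Fin.sum_univ_two, Matrix.one_apply]
  have hentry : ((w * g * w⁻¹ * g⁻¹ : GL (Fin 2) F) : Matrix (Fin 2) (Fin 2) F) 0 0
      = (A * D - B * C)⁻¹ * (D * D - C * C) := by
    have : ((w * g * w⁻¹ * g⁻¹ : GL (Fin 2) F) : Matrix (Fin 2) (Fin 2) F)
        = (w : Matrix (Fin 2) (Fin 2) F) * g * ((w⁻¹ : GL (Fin 2) F) : Matrix (Fin 2) (Fin 2) F)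
          * ((g⁻¹ : GL (Fin 2) F) : Matrix (Fin 2) (Fin 2) F) := by
      simp [Units.val_mul]
    rw [this, hw, hM, hwinv, hginv]
    simp [Matrix.mul_apply, Fin.sum_univ_two, Matrix.smul_apply]
    ring
  have hinv_ne : (A * D - B * C)⁻¹ ≠ 0 := inv_ne_zero hΔ
  rw [hentry]
  constructor
  · intro hne
    have hkey : D * D - C * C ≠ 0 := by
      intro h0
      apply hne
      rw [h0, mul_zero]
    -- construct h = !![D, C; C, D]
    set k : F := (D * D - C * C)⁻¹ with hk
    have hkne : k ≠ 0 := inv_ne_zero hkey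
    have hmul : (!![D, C; C, D] : Matrix (Fin 2) (Fin 2) F) * (k • !![D, -C; -C, D]) = 1 := by
      rw [Matrix.mul_smul]
      rw [show (!![D, C; C, D] * !![D, -C; -C, D] : Matrix (Fin 2) (Fin 2) F)
          = (D * D - C * C) • 1 by
        ext i j
        fin_cases i <;> fin_cases j <;>
          simp [Matrix.mul_apply, Fin.sum_univ_two, Matrix.one_apply] <;> ring]
      rw [smul_smul, hk, inv_mul_cancel₀ hkey, one_smul]
    have hmul' : (k • !![D, -C; -C, D]) * (!![D, C; C, D] : Matrix (Fin 2) (Fin 2) F) = 1 := by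
      rw [Matrix.smul_mul]
      rw [show (!![D, -C; -C, D] * !![D, C; C, D] : Matrix (Fin 2) (Fin 2) F)
          = (D * D - C * C) • 1 by
        ext i j
        fin_cases i <;> fin_cases j <;>
          simp [Matrix.mul_apply, Fin.sum_univ_two, Matrix.one_apply] <;> ring]
      rw [smul_smul, hk, inv_mul_cancel₀ hkey, one_smul]
    set h : GL (Fin 2) F := ⟨!![D, C; C, D], k • !![D, -C; -C, D], hmul, hmul'⟩ with hh
    refine ⟨g * h⁻¹, h, ?_, ⟨D, C, rfl⟩, by group⟩
    refine ⟨k * (A * D - B * C), k * (B * D - A * C), k * (D * D - C * C), ?_⟩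
    have hco : ((g * h⁻¹ : GL (Fin 2) F) : Matrix (Fin 2) (Fin 2) F)
        = !![A, B; C, D] * (k • !![D, -C; -C, D]) := by
      rw [Units.val_mul, hM]; rfl
    rw [hco]
    ext i j
    fin_cases i <;> fin_cases j <;>
      simp [Matrix.mul_apply, Fin.sum_univ_two, Matrix.smul_apply] <;> ring
  · rintro ⟨p, h, ⟨a, b, c, hp⟩, ⟨x, y, hxy⟩, rfl⟩
    have hpc : c ≠ 0 := by
      have : IsUnit (p : Matrix (Fin 2) (Fin 2) F) := ⟨p, rfl⟩
      have := ((Matrix.isUnit_iff_isUnit_det _).mp this).ne_zero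
      rw [hp, Matrix.det_fin_two_of] at this
      intro h0; apply this; rw [h0]; ring
    have hhd : x * x - y * y ≠ 0 := by
      have : IsUnit (h : Matrix (Fin 2) (Fin 2) F) := ⟨h, rfl⟩
      have := ((Matrix.isUnit_iff_isUnit_det _).mp this).ne_zero
      rwa [hxy, Matrix.det_fin_two_of] at this
    have hCv : C = c * y := by
      rw [hC, Units.val_mul, hp, hxy]
      simp [Matrix.mul_apply, Fin.sum_univ_two]
    have hDv : D = c * x := by
      rw [hD, Units.val_mul, hp, hxy]
      simp [Matrix.mul_apply, Fin.sum_univ_two]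
    apply mul_ne_zero hinv_ne
    rw [hCv, hDv]
    intro h0
    apply hhd
    have h1 : c * c * (x * x - y * y) = 0 := by rw [← h0]; ring
    rcases mul_eq_zero.mp h1 with h2 | h2
    · exact absurd (mul_self_eq_zero.mp h2) hpc
    · exact h2
end
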